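/- The nine matrices 1, O_A, O_B, O_A², O_A O_B, O_B O_A, O_B², O_A² O_B, O_A O_B² are linearly independent over ℂ(Q), where O_A = diag(−i(Q²−Q^{−2}), 0, i(Q²−Q^{−2})) and O_B has rows (0,1,0), (−(Q²−Q^{−2})²/2, 0, 1), (0, −(Q²−Q^{−2})²/2, 0). Consequently the subalgebra of 3×3 matrices over ℂ(Q) generated by O_A and O_B has dimension at least 9, hence equals all of Mat₃(ℂ(Q)). -/

import Mathlib

noncomputable section

/-- The variable `Q` in the field `ℂ(Q)` of rational functions. -/
def Qv : RatFunc ℂ := RatFunc.X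

/-- The imaginary unit `i` viewed as a constant in `ℂ(Q)`. -/
def ii : RatFunc ℂ := RatFunc.C Complex.I

/-- The element `Q² − Q^{−2}` of `ℂ(Q)`. -/
def w : RatFunc ℂ := Qv ^ 2 - (Qv ^ 2)⁻¹

/-- `O_A = diag(−i(Q²−Q^{−2}), 0, i(Q²−Q^{−2}))`. -/
def OA : Matrix (Fin 3) (Fin 3) (RatFunc ℂ) :=
  !![-(ii * w), 0, 0; 0, 0, 0; 0, 0, ii * w]

/-- `O_B` with rows `(0,1,0)`, `(−(Q²−Q^{−2})²/2, 0, 1)`, `(0, −(Q²−Q^{−2})²/2, 0)`. -/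
def OB : Matrix (Fin 3) (Fin 3) (RatFunc ℂ) :=
  !![0, 1, 0; -(w ^ 2) / 2, 0, 1; 0, -(w ^ 2) / 2, 0]

lemma hQv : Qv ≠ 0 := RatFunc.X_ne_zero

lemma hQv4 : Qv ^ 4 ≠ 1 := by
  have h : (algebraMap (Polynomial ℂ) (RatFunc ℂ)) (Polynomial.X ^ 4 - 1) ≠ 0 := by
    rw [map_ne_zero_iff _ (RatFunc.algebraMap_injective ℂ)]
    intro h
    simpa using congrArg (Polynomial.eval 0) h
  rw [map_sub, map_pow, map_one, RatFunc.algebraMap_X] at h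
  exact fun hh => h (sub_eq_zero.mpr hh)

lemma hw : w ≠ 0 := by
  intro h
  apply hQv4
  have h2 : Qv ^ 2 ≠ 0 := pow_ne_zero _ hQv
  rw [w, sub_eq_zero] at h
  have := congrArg (· * Qv ^ 2) h
  simp [inv_mul_cancel₀ h2] at this
  linear_combination this

lemma hii : ii ≠ 0 := by
  simp [ii, map_eq_zero, Complex.I_ne_zero]

lemma h2RF : (2 : RatFunc ℂ) ≠ 0 := by
  intro h
  have h' : (RatFunc.C (2 : ℂ)) = 0 := by rw [map_ofNat]; exact h
  rw [map_eq_zero] at h'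
  norm_num at h'

lemma hOA2 : OA ^ 2 = !![ii * w * (ii * w), 0, 0; 0, 0, 0; 0, 0, ii * w * (ii * w)] := by
  rw [pow_two, OA, Matrix.mul_fin_three]; ring_nf

lemma hOAB : OA * OB = !![0, -(ii * w), 0; 0, 0, 0; 0, ii * w * (-(w ^ 2) / 2), 0] := by
  rw [OA, OB, Matrix.mul_fin_three]; ring_nf

lemma hOBA : OB * OA = !![0, 0, 0; -(ii * w * (-(w ^ 2) / 2)), 0, ii * w; 0, 0, 0] := by
  rw [OA, OB, Matrix.mul_fin_three]; ring_nf

lemma hOB2 : OB ^ 2 = !![-(w ^ 2) / 2, 0, 1; 0, 2 * (-(w ^ 2) / 2), 0;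
    -(w ^ 2) / 2 * (-(w ^ 2) / 2), 0, -(w ^ 2) / 2] := by
  rw [pow_two, OB, Matrix.mul_fin_three]; ring_nf

lemma hOA2B : OA ^ 2 * OB = !![0, ii * w * (ii * w), 0; 0, 0, 0;
    0, ii * w * (ii * w) * (-(w ^ 2) / 2), 0] := by
  rw [hOA2, OB, Matrix.mul_fin_three]; ring_nf

lemma hOAB2 : OA * OB ^ 2 = !![-(ii * w * (-(w ^ 2) / 2)), 0, -(ii * w); 0, 0, 0;
    ii * w * (-(w ^ 2) / 2) * (-(w ^ 2) / 2), 0, ii * w * (-(w ^ 2) / 2)] := by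
  rw [hOB2, OA, Matrix.mul_fin_three]; ring_nf

set_option maxHeartbeats 2000000 in
set_option synthInstance.maxHeartbeats 1000000 in
lemma indep :
    LinearIndependent (RatFunc ℂ)
      ![(1 : Matrix (Fin 3) (Fin 3) (RatFunc ℂ)), OA, OB, OA ^ 2, OA * OB, OB * OA,
        OB ^ 2, OA ^ 2 * OB, OA * OB ^ 2] := by
  rw [Fintype.linearIndependent_iff]
  intro g hg
  have ha : ii * w ≠ 0 := mul_ne_zero hii hw
  have hs : -(w ^ 2) / 2 ≠ 0 :=
    div_ne_zero (neg_ne_zero.mpr (pow_ne_zero _ hw)) h2RF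
  rw [Matrix.one_fin_three, hOA2B, hOAB2, hOA2, hOAB, hOBA, hOB2] at hg
  have key : ∀ i j : Fin 3,
      g 0 * (!![(1:RatFunc ℂ),0,0;0,1,0;0,0,1]) i j + g 1 * OA i j + g 2 * OB i j
      + g 3 * (!![ii * w * (ii * w), 0, 0; 0, 0, 0; 0, 0, ii * w * (ii * w)] : Matrix (Fin 3) (Fin 3) (RatFunc ℂ)) i j
      + g 4 * (!![0, -(ii * w), 0; 0, 0, 0; 0, ii * w * (-(w ^ 2) / 2), 0] : Matrix (Fin 3) (Fin 3) (RatFunc ℂ)) i j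
      + g 5 * (!![0, 0, 0; -(ii * w * (-(w ^ 2) / 2)), 0, ii * w; 0, 0, 0] : Matrix (Fin 3) (Fin 3) (RatFunc ℂ)) i j
      + g 6 * (!![-(w ^ 2) / 2, 0, 1; 0, 2 * (-(w ^ 2) / 2), 0; -(w ^ 2) / 2 * (-(w ^ 2) / 2), 0, -(w ^ 2) / 2] : Matrix (Fin 3) (Fin 3) (RatFunc ℂ)) i j
      + g 7 * (!![0, ii * w * (ii * w), 0; 0, 0, 0; 0, ii * w * (ii * w) * (-(w ^ 2) / 2), 0] : Matrix (Fin 3) (Fin 3) (RatFunc ℂ)) i j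
      + g 8 * (!![-(ii * w * (-(w ^ 2) / 2)), 0, -(ii * w); 0, 0, 0; ii * w * (-(w ^ 2) / 2) * (-(w ^ 2) / 2), 0, ii * w * (-(w ^ 2) / 2)] : Matrix (Fin 3) (Fin 3) (RatFunc ℂ)) i j = 0 := by
    intro i j
    have := congrFun (congrFun hg i) j
    simpa [Fin.sum_univ_succ, Matrix.sum_apply, smul_eq_mul, add_assoc] using this
  have h02 := key 0 2; have h20 := key 2 0; have h11 := key 1 1
  have h10 := key 1 0; have h12 := key 1 2
  have h01 := key 0 1; have h21 := key 2 1
  have h00 := key 0 0; have h22 := key 2 2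
  simp [OA, OB, Matrix.vecHead, Matrix.vecTail] at h00 h01 h02 h10 h11 h12 h20 h21 h22
  have e8 : g 8 = 0 := by
    have h8 : g 8 * (2 * (ii * w) * (-(w ^ 2) / 2) * (-(w ^ 2) / 2)) = 0 := by
      linear_combination h20 - ((-(w ^ 2) / 2) * (-(w ^ 2) / 2)) * h02
    exact (mul_eq_zero.mp h8).resolve_right
      (mul_ne_zero (mul_ne_zero (mul_ne_zero h2RF ha) hs) hs)
  have e6 : g 6 = 0 := by linear_combination h02 + (ii * w) * e8
  have e0 : g 0 = 0 := by linear_combination h11 - (2 * (-(w ^ 2) / 2)) * e6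
  have e5 : g 5 = 0 := by
    have h5 : g 5 * (2 * (ii * w) * (-(w ^ 2) / 2)) = 0 := by
      linear_combination (-(w ^ 2) / 2) * h12 - h10
    exact (mul_eq_zero.mp h5).resolve_right
      (mul_ne_zero (mul_ne_zero h2RF ha) hs)
  have e2 : g 2 = 0 := by linear_combination h12 - (ii * w) * e5
  have e4 : g 4 = 0 := by
    have h4 : g 4 * (2 * (ii * w) * (-(w ^ 2) / 2)) = 0 := by
      linear_combination h21 - (-(w ^ 2) / 2) * h01
    exact (mul_eq_zero.mp h4).resolve_right
      (mul_ne_zero (mul_ne_zero h2RF ha) hs)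
  have e7 : g 7 = 0 := by
    have h7 : g 7 * ((ii * w) * (ii * w)) = 0 := by
      linear_combination h01 - e2 + (ii * w) * e4
    exact (mul_eq_zero.mp h7).resolve_right (mul_ne_zero ha ha)
  have e1 : g 1 = 0 := by
    have h1 : g 1 * (2 * (ii * w)) = 0 := by
      linear_combination h22 - h00 - (2 * (ii * w) * (-(w ^ 2) / 2)) * e8
    exact (mul_eq_zero.mp h1).resolve_right (mul_ne_zero h2RF ha)
  have e3 : g 3 = 0 := by
    have h3 : g 3 * ((ii * w) * (ii * w)) = 0 := by
      linear_combination h22 - e0 - (ii * w) * e1 - (-(w ^ 2) / 2) * e6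
        - ((ii * w) * (-(w ^ 2) / 2)) * e8
    exact (mul_eq_zero.mp h3).resolve_right (mul_ne_zero ha ha)
  intro i
  fin_cases i <;> first
    | exact e0 | exact e1 | exact e2 | exact e3 | exact e4
    | exact e5 | exact e6 | exact e7 | exact e8

theorem stmt15 :
    LinearIndependent (RatFunc ℂ)
      ![(1 : Matrix (Fin 3) (Fin 3) (RatFunc ℂ)), OA, OB, OA ^ 2, OA * OB, OB * OA,
        OB ^ 2, OA ^ 2 * OB, OA * OB ^ 2] ∧
    Algebra.adjoin (RatFunc ℂ) {OA, OB} = ⊤ := by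
  refine ⟨indep, ?_⟩
  set A := Algebra.adjoin (RatFunc ℂ) {OA, OB} with hA
  have hAm : OA ∈ A := Algebra.subset_adjoin (by simp)
  have hBm : OB ∈ A := Algebra.subset_adjoin (by simp)
  have hmem : ∀ k : Fin 9,
      (![(1 : Matrix (Fin 3) (Fin 3) (RatFunc ℂ)), OA, OB, OA ^ 2, OA * OB, OB * OA,
        OB ^ 2, OA ^ 2 * OB, OA * OB ^ 2] k) ∈ Subalgebra.toSubmodule A := by
    intro k
    rw [Subalgebra.mem_toSubmodule]
    fin_cases k
    · exact one_mem A
    · exact hAm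
    · exact hBm
    · exact pow_mem hAm 2
    · exact mul_mem hAm hBm
    · exact mul_mem hBm hAm
    · exact pow_mem hBm 2
    · exact mul_mem (pow_mem hAm 2) hBm
    · exact mul_mem hAm (pow_mem hBm 2)
  rw [← Algebra.toSubmodule_eq_top]
  apply Submodule.eq_top_of_finrank_eq
  have h9 : Module.finrank (RatFunc ℂ) (Matrix (Fin 3) (Fin 3) (RatFunc ℂ)) = 9 := by
    simp [Module.finrank_matrix]
  rw [h9]
  refine le_antisymm (h9 ▸ Submodule.finrank_le _) ?_
  have hind : LinearIndependent (RatFunc ℂ)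
      (fun k : Fin 9 => (⟨_, hmem k⟩ : Subalgebra.toSubmodule A)) := by
    apply LinearIndependent.of_comp (Subalgebra.toSubmodule A).subtype
    convert indep <;> rfl
  simpa using hind.fintype_card_le_finrank

end
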